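/- Let ξ be a real number and x, y, z ∈ ℤ³. With L(v) := max(|v₁ - v₀ξ|, |v₂ - v₀ξ²|) and ‖v‖ := max(|v₀|,|v₁|,|v₂|), the 3×3 determinant det(x,y,z) (of the matrix whose rows are x, y, z) satisfies |det(x,y,z)| ≤ 6·(‖x‖·L(y)·L(z) + ‖y‖·L(x)·L(z) + ‖z‖·L(x)·L(y)). -/
import Mathlib


/-- The sup norm of an integer vector, as a real number. -/
def vnorm (v : Fin 3 → ℤ) : ℝ := max (max |(v 0 : ℝ)| |(v 1 : ℝ)|) |(v 2 : ℝ)|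

/-- The quantity `L(v) = max(|v₁ - v₀ξ|, |v₂ - v₀ξ²|)`. -/
def vL (ξ : ℝ) (v : Fin 3 → ℤ) : ℝ :=
  max |(v 1 : ℝ) - (v 0 : ℝ) * ξ| |(v 2 : ℝ) - (v 0 : ℝ) * ξ ^ 2|

theorem stmt_1 (ξ : ℝ) (x y z : Fin 3 → ℤ) :
    |(((Matrix.of ![x, y, z]).det : ℤ) : ℝ)| ≤
      6 * (vnorm x * vL ξ y * vL ξ z + vnorm y * vL ξ x * vL ξ z +
           vnorm z * vL ξ x * vL ξ y) := by
  set a1 : ℝ := (x 1 : ℝ) - (x 0 : ℝ) * ξ with ha1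
  set a2 : ℝ := (x 2 : ℝ) - (x 0 : ℝ) * ξ ^ 2 with ha2
  set b1 : ℝ := (y 1 : ℝ) - (y 0 : ℝ) * ξ with hb1
  set b2 : ℝ := (y 2 : ℝ) - (y 0 : ℝ) * ξ ^ 2 with hb2
  set c1 : ℝ := (z 1 : ℝ) - (z 0 : ℝ) * ξ with hc1
  set c2 : ℝ := (z 2 : ℝ) - (z 0 : ℝ) * ξ ^ 2 with hc2
  have hdet : (((Matrix.of ![x, y, z]).det : ℤ) : ℝ) =
      (x 0 : ℝ) * (b1 * c2 - b2 * c1) - (y 0 : ℝ) * (a1 * c2 - a2 * c1)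
        + (z 0 : ℝ) * (a1 * b2 - a2 * b1) := by
    simp [Matrix.det_fin_three, ha1, ha2, hb1, hb2, hc1, hc2]
    ring
  rw [hdet]
  have hx0 : |(x 0 : ℝ)| ≤ vnorm x := le_max_of_le_left (le_max_left _ _)
  have hy0 : |(y 0 : ℝ)| ≤ vnorm y := le_max_of_le_left (le_max_left _ _)
  have hz0 : |(z 0 : ℝ)| ≤ vnorm z := le_max_of_le_left (le_max_left _ _)
  have ha1' : |a1| ≤ vL ξ x := le_max_left _ _
  have ha2' : |a2| ≤ vL ξ x := le_max_right _ _
  have hb1' : |b1| ≤ vL ξ y := le_max_left _ _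
  have hb2' : |b2| ≤ vL ξ y := le_max_right _ _
  have hc1' : |c1| ≤ vL ξ z := le_max_left _ _
  have hc2' : |c2| ≤ vL ξ z := le_max_right _ _
  have hLx : 0 ≤ vL ξ x := le_trans (abs_nonneg _) ha1'
  have hLy : 0 ≤ vL ξ y := le_trans (abs_nonneg _) hb1'
  have hLz : 0 ≤ vL ξ z := le_trans (abs_nonneg _) hc1'
  have hnx : 0 ≤ vnorm x := le_trans (abs_nonneg _) hx0
  have hny : 0 ≤ vnorm y := le_trans (abs_nonneg _) hy0
  have hnz : 0 ≤ vnorm z := le_trans (abs_nonneg _) hz0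
  have key : ∀ (u : ℝ) (p q r s : ℝ) (U P Q : ℝ), |u| ≤ U → |p| ≤ P → |q| ≤ Q →
      |r| ≤ P → |s| ≤ Q → |u * (p * s - r * q)| ≤ 2 * (U * P * Q) := by
    intro u p q r s U P Q hu hp hq hr hs
    have hU : 0 ≤ U := le_trans (abs_nonneg _) hu
    have hP : 0 ≤ P := le_trans (abs_nonneg _) hp
    have hQ : 0 ≤ Q := le_trans (abs_nonneg _) hq
    calc |u * (p * s - r * q)| = |u| * |p * s - r * q| := abs_mul _ _
      _ ≤ U * (|p * s| + |r * q|) :=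
        mul_le_mul hu (abs_sub _ _) (abs_nonneg _) hU
      _ = U * (|p| * |s| + |r| * |q|) := by rw [abs_mul, abs_mul]
      _ ≤ U * (P * Q + P * Q) := by
        gcongr
      _ = 2 * (U * P * Q) := by ring
  have h1 : |(x 0 : ℝ) * (b1 * c2 - b2 * c1)| ≤ 2 * (vnorm x * vL ξ y * vL ξ z) :=
    key _ _ _ _ _ _ _ _ hx0 hb1' hc1' hb2' hc2'
  have h2 : |(y 0 : ℝ) * (a1 * c2 - a2 * c1)| ≤ 2 * (vnorm y * vL ξ x * vL ξ z) :=
    key _ _ _ _ _ _ _ _ hy0 ha1' hc1' ha2' hc2'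
  have h3 : |(z 0 : ℝ) * (a1 * b2 - a2 * b1)| ≤ 2 * (vnorm z * vL ξ x * vL ξ y) :=
    key _ _ _ _ _ _ _ _ hz0 ha1' hb1' ha2' hb2'
  calc |(x 0 : ℝ) * (b1 * c2 - b2 * c1) - (y 0 : ℝ) * (a1 * c2 - a2 * c1)
        + (z 0 : ℝ) * (a1 * b2 - a2 * b1)|
      ≤ |(x 0 : ℝ) * (b1 * c2 - b2 * c1) - (y 0 : ℝ) * (a1 * c2 - a2 * c1)|
        + |(z 0 : ℝ) * (a1 * b2 - a2 * b1)| := abs_add_le _ _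
    _ ≤ |(x 0 : ℝ) * (b1 * c2 - b2 * c1)| + |(y 0 : ℝ) * (a1 * c2 - a2 * c1)|
        + |(z 0 : ℝ) * (a1 * b2 - a2 * b1)| := by gcongr; exact abs_sub _ _
    _ ≤ 2 * (vnorm x * vL ξ y * vL ξ z) + 2 * (vnorm y * vL ξ x * vL ξ z)
        + 2 * (vnorm z * vL ξ x * vL ξ y) := by gcongr
    _ ≤ 6 * (vnorm x * vL ξ y * vL ξ z + vnorm y * vL ξ x * vL ξ z +
           vnorm z * vL ξ x * vL ξ y) := by nlinarith [mul_nonneg (mul_nonneg hnx hLy) hLz, mul_nonneg (mul_nonneg hny hLx) hLz, mul_nonneg (mul_nonneg hnz hLx) hLy]
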